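/- The two-dimensional mirror subshift is not sofic: there is no SFT Y over any finite alphabet and letter-to-letter projection π with π(Y) = X_mirror. -/

import Mathlib

/-- The two-dimensional mirror subshift: if two vertically adjacent 1's occur,
their whole column is filled with 1's; at most one column is filled; and the two
sides of a filled column are mirror images of each other. -/
def mirrorShift : Set (ℤ × ℤ → Bool) :=
  {x | (∀ c j : ℤ, x (c, j) = true → x (c, j + 1) = true → ∀ j' : ℤ, x (c, j') = true) ∧
       (∀ c c' : ℤ, (∀ j : ℤ, x (c, j) = true) → (∀ j : ℤ, x (c', j) = true) → c = c') ∧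
       (∀ c : ℤ, (∀ j : ℤ, x (c, j) = true) →
          ∀ k : ℤ, 1 ≤ k → ∀ j : ℤ, x (c - k, j) = x (c + k, j))}

namespace MirrorAux

/-- Configuration with the mirror column at `0` and block data `f` placed at
columns `-(i+1)` / `i+1` and rows `2(j+1)`. -/
def mconf (m : ℕ) (f : Fin m × Fin m → Bool) : ℤ × ℤ → Bool := fun p =>
  decide (p.1 = 0 ∨ ∃ i j : Fin m,
    (p.1 = -((i : ℤ) + 1) ∨ p.1 = (i : ℤ) + 1) ∧ p.2 = 2 * ((j : ℤ) + 1) ∧ f (i, j) = true)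

lemma mconf_eq_true {m : ℕ} {f : Fin m × Fin m → Bool} {p : ℤ × ℤ} :
    mconf m f p = true ↔ (p.1 = 0 ∨ ∃ i j : Fin m,
      (p.1 = -((i : ℤ) + 1) ∨ p.1 = (i : ℤ) + 1) ∧ p.2 = 2 * ((j : ℤ) + 1) ∧ f (i, j) = true) := by
  simp [mconf]

lemma mconf_zero (m : ℕ) (f : Fin m × Fin m → Bool) (j : ℤ) :
    mconf m f (0, j) = true := by
  rw [mconf_eq_true]; exact Or.inl rfl

lemma mconf_left (m : ℕ) (f : Fin m × Fin m → Bool) (i j : Fin m) :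
    mconf m f (-((i : ℤ) + 1), 2 * ((j : ℤ) + 1)) = f (i, j) := by
  cases hf : f (i, j) with
  | true =>
    rw [mconf_eq_true]
    exact Or.inr ⟨i, j, Or.inl rfl, rfl, hf⟩
  | false =>
    apply Bool.eq_false_iff.mpr
    rw [Ne, mconf_eq_true]
    rintro (h | ⟨i', j', hci, hr, hfij⟩)
    · simp only at h; omega
    · simp only at hci hr
      have hi : (i' : ℕ) = (i : ℕ) := by omega
      have hj : (j' : ℕ) = (j : ℕ) := by omega
      have hi' : i' = i := Fin.ext hi
      have hj' : j' = j := Fin.ext hj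
      rw [hi', hj'] at hfij
      rw [hfij] at hf
      exact Bool.noConfusion hf

lemma mconf_right (m : ℕ) (f : Fin m × Fin m → Bool) (i j : Fin m) :
    mconf m f ((i : ℤ) + 1, 2 * ((j : ℤ) + 1)) = f (i, j) := by
  cases hf : f (i, j) with
  | true =>
    rw [mconf_eq_true]
    exact Or.inr ⟨i, j, Or.inr rfl, rfl, hf⟩
  | false =>
    apply Bool.eq_false_iff.mpr
    rw [Ne, mconf_eq_true]
    rintro (h | ⟨i', j', hci, hr, hfij⟩)
    · simp only at h; omega
    · simp only at hci hr
      have hi : (i' : ℕ) = (i : ℕ) := by omega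
      have hj : (j' : ℕ) = (j : ℕ) := by omega
      have hi' : i' = i := Fin.ext hi
      have hj' : j' = j := Fin.ext hj
      rw [hi', hj'] at hfij
      rw [hfij] at hf
      exact Bool.noConfusion hf

/-- The block configurations all lie in the mirror shift. -/
lemma mconf_mem (m : ℕ) (f : Fin m × Fin m → Bool) : mconf m f ∈ mirrorShift := by
  refine ⟨?_, ?_, ?_⟩
  · intro c j h1 h2 j'
    rw [mconf_eq_true] at h1 h2 ⊢
    rcases h1 with h | ⟨i, a, hc, hr, _⟩
    · exact Or.inl h
    · rcases h2 with h | ⟨i', b, hc', hr', _⟩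
      · exact Or.inl h
      · exfalso; simp only at hr hr'; omega
  · intro c c' hc hc'
    have h1 := hc 1
    have h2 := hc' 1
    rw [mconf_eq_true] at h1 h2
    rcases h1 with h | ⟨i, a, hci, hr, _⟩
    · rcases h2 with h' | ⟨i', b, hci', hr', _⟩
      · simp only at h h'; omega
      · exfalso; simp only at hr'; omega
    · exfalso; simp only at hr; omega
  · intro c hc k _ j
    have h1 := hc 1
    rw [mconf_eq_true] at h1
    have hc0 : c = 0 := by
      rcases h1 with h | ⟨i, a, hci, hr, _⟩
      · exact h
      · exfalso; simp only at hr; omega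
    subst hc0
    unfold mconf
    apply decide_eq_decide.mpr
    constructor
    · rintro (h | ⟨i, jj, hci, hr, hf⟩)
      · exact Or.inl (by simp only at h ⊢; omega)
      · refine Or.inr ⟨i, jj, ?_, hr, hf⟩
        simp only at hci ⊢
        omega
    · rintro (h | ⟨i, jj, hci, hr, hf⟩)
      · exact Or.inl (by simp only at h ⊢; omega)
      · refine Or.inr ⟨i, jj, ?_, hr, hf⟩
        simp only at hci ⊢
        omega

/-- The box `B`: columns `[-m, -1]`, rows `[0, 2m+2]`. It contains the whole
left block of `mconf`. -/
def inB (m : ℕ) (p : ℤ × ℤ) : Prop :=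
  -(m : ℤ) ≤ p.1 ∧ p.1 ≤ -1 ∧ 0 ≤ p.2 ∧ p.2 ≤ 2 * (m : ℤ) + 2

instance (m : ℕ) (p : ℤ × ℤ) : Decidable (inB m p) := by
  unfold inB; infer_instance

/-- The inner part of the box, at distance ≥ n from the complement. -/
def inBinner (n m : ℕ) (p : ℤ × ℤ) : Prop :=
  -(m : ℤ) + n ≤ p.1 ∧ p.1 ≤ -1 - n ∧ (n : ℤ) ≤ p.2 ∧ p.2 ≤ 2 * (m : ℤ) + 2 - n

/-- Index type for the collar of width `n` of the box `B`. -/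
abbrev Collar (n m : ℕ) : Type :=
  (Fin 2 × Fin n × Fin (2 * m + 3)) ⊕ (Fin 2 × Fin m × Fin n)

/-- Location in `ℤ²` of each collar index. -/
def loc (n m : ℕ) : Collar n m → ℤ × ℤ
  | .inl (s, i, r) => (if s = 0 then -(m : ℤ) + (i : ℤ) else -1 - (i : ℤ), (r : ℤ))
  | .inr (s, c, r) => (-1 - (c : ℤ), if s = 0 then (r : ℤ) else 2 * (m : ℤ) + 2 - (r : ℤ))

lemma card_collar (n m : ℕ) :
    Fintype.card (Collar n m) = 2 * (n * (2 * m + 3)) + 2 * (m * n) := by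
  simp only [Collar, Fintype.card_sum, Fintype.card_prod, Fintype.card_fin]

/-- Every point of the box that is not in the inner part is a collar location. -/
lemma loc_surj (n m : ℕ) (p : ℤ × ℤ) (hB : inB m p) (hI : ¬ inBinner n m p) :
    ∃ idx : Collar n m, loc n m idx = p := by
  obtain ⟨h1, h2, h3, h4⟩ := hB
  by_cases hc1 : p.1 < -(m : ℤ) + n
  · have hb1 : (p.1 + m).toNat < n := by omega
    have hb2 : p.2.toNat < 2 * m + 3 := by omega
    refine ⟨Sum.inl (0, ⟨(p.1 + m).toNat, hb1⟩, ⟨p.2.toNat, hb2⟩), ?_⟩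
    simp only [loc, if_pos rfl]
    have : ((⟨(p.1 + m).toNat, hb1⟩ : Fin n) : ℤ) = p.1 + m := by
      simp; omega
    rw [this]
    have : ((⟨p.2.toNat, hb2⟩ : Fin (2 * m + 3)) : ℤ) = p.2 := by
      simp; omega
    rw [this]
    ext <;> simp <;> omega
  by_cases hc2 : -1 - (n : ℤ) < p.1
  · have hb1 : (-1 - p.1).toNat < n := by omega
    have hb2 : p.2.toNat < 2 * m + 3 := by omega
    refine ⟨Sum.inl (1, ⟨(-1 - p.1).toNat, hb1⟩, ⟨p.2.toNat, hb2⟩), ?_⟩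
    simp only [loc]
    rw [if_neg (by decide)]
    ext <;> simp <;> omega
  by_cases hc3 : p.2 < (n : ℤ)
  · have hb1 : (-1 - p.1).toNat < m := by omega
    have hb2 : p.2.toNat < n := by omega
    refine ⟨Sum.inr (0, ⟨(-1 - p.1).toNat, hb1⟩, ⟨p.2.toNat, hb2⟩), ?_⟩
    simp only [loc, if_pos rfl]
    ext <;> simp <;> omega
  · have hc4 : 2 * (m : ℤ) + 2 - n < p.2 := by
      by_contra hh
      push_neg at hh
      exact hI ⟨by omega, by omega, by omega, hh⟩
    have hb1 : (-1 - p.1).toNat < m := by omega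
    have hb2 : (2 * (m : ℤ) + 2 - p.2).toNat < n := by omega
    refine ⟨Sum.inr (1, ⟨(-1 - p.1).toNat, hb1⟩, ⟨(2 * (m : ℤ) + 2 - p.2).toNat, hb2⟩), ?_⟩
    simp only [loc]
    rw [if_neg (by decide)]
    ext <;> simp <;> omega

/-- If an `n × n` window contains a point of the inner box, the whole window
lies inside the box. -/
lemma window_in_box {n m : ℕ} {v : ℤ × ℤ} (u : Fin n × Fin n)
    (h : inBinner n m (v.1 + (u.1 : ℤ), v.2 + (u.2 : ℤ))) :
    ∀ u' : Fin n × Fin n, inB m (v.1 + (u'.1 : ℤ), v.2 + (u'.2 : ℤ)) := by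
  intro u'
  obtain ⟨h1, h2, h3, h4⟩ := h
  have hu1 : (u.1 : ℕ) < n := u.1.isLt
  have hu2 : (u.2 : ℕ) < n := u.2.isLt
  have hu1' : (u'.1 : ℕ) < n := u'.1.isLt
  have hu2' : (u'.2 : ℕ) < n := u'.2.isLt
  refine ⟨?_, ?_, ?_, ?_⟩ <;> simp only at * <;> omega

/-- The counting estimate. -/
lemma card_lt (n a m K : ℕ) (hm : m = 12 * (n * a + 1)) (hK : K = 2 * (n * (2 * m + 3)) + 2 * (m * n)) :
    a ^ K < 2 ^ (m * m) := by
  have h1 : a ^ K ≤ (2 ^ a) ^ K :=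
    Nat.pow_le_pow_left (Nat.le_of_lt (Nat.lt_two_pow_self (n := a))) K
  have h2 : (2 ^ a) ^ K = 2 ^ (a * K) := by rw [← pow_mul]
  have h3 : a * K < m * m := by subst hm hK; nlinarith [Nat.zero_le (n * a)]
  calc a ^ K ≤ 2 ^ (a * K) := h2 ▸ h1
    _ < 2 ^ (m * m) := Nat.pow_lt_pow_right (by norm_num) h3

end MirrorAux

/-- The two-dimensional mirror subshift is not sofic: it is not the
letter-to-letter projection of any SFT (given by a finite alphabet and a set of
allowed n×n patterns). -/
theorem mirror_not_sofic :
    ¬ ∃ (A : Type) (_ : Fintype A) (n : ℕ) (Allowed : Set ((Fin n × Fin n) → A))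
        (π : A → Bool),
      mirrorShift = (fun y : ℤ × ℤ → A => fun v => π (y v)) ''
        {y : ℤ × ℤ → A | ∀ v : ℤ × ℤ,
          (fun u : Fin n × Fin n => y (v.1 + (u.1 : ℤ), v.2 + (u.2 : ℤ))) ∈ Allowed} := by
  classical
  rintro ⟨A, hFin, n, Allowed, π, h⟩
  set a := Fintype.card A with ha
  set m := 12 * (n * a + 1) with hmdef
  -- every block configuration has a lift
  have hlift : ∀ f : Fin m × Fin m → Bool, ∃ y : ℤ × ℤ → A,
      (∀ v : ℤ × ℤ,
        (fun u : Fin n × Fin n => y (v.1 + (u.1 : ℤ), v.2 + (u.2 : ℤ))) ∈ Allowed) ∧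
      (fun v => π (y v)) = MirrorAux.mconf m f := by
    intro f
    have hx := MirrorAux.mconf_mem m f
    rw [h] at hx
    obtain ⟨y, hy, hπ⟩ := hx
    exact ⟨y, hy, hπ⟩
  choose Y hY hYπ using hlift
  -- pigeonhole on the collar trace
  have hcard : Fintype.card (MirrorAux.Collar n m → A)
      < Fintype.card (Fin m × Fin m → Bool) := by
    rw [Fintype.card_fun, Fintype.card_fun, MirrorAux.card_collar,
      Fintype.card_bool, Fintype.card_prod, Fintype.card_fin]
    exact MirrorAux.card_lt n a m _ hmdef rfl
  obtain ⟨f, g, hfg, htr⟩ :=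
    Fintype.exists_ne_map_eq_of_card_lt
      (fun f : Fin m × Fin m → Bool => (fun idx => Y f (MirrorAux.loc n m idx))) hcard
  obtain ⟨⟨i0, j0⟩, hq0⟩ := Function.ne_iff.mp hfg
  have hagree : ∀ p : ℤ × ℤ, (∃ idx, MirrorAux.loc n m idx = p) → Y f p = Y g p := by
    rintro p ⟨idx, rfl⟩
    exact congrFun htr idx
  -- the spliced configuration
  set z : ℤ × ℤ → A := fun p => if MirrorAux.inB m p then Y g p else Y f p with hzdef
  have hzY : ∀ v : ℤ × ℤ,
      (fun u : Fin n × Fin n => z (v.1 + (u.1 : ℤ), v.2 + (u.2 : ℤ))) ∈ Allowed := by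
    intro v
    by_cases hout : ∀ u : Fin n × Fin n, MirrorAux.inB m (v.1 + (u.1 : ℤ), v.2 + (u.2 : ℤ))
    · have heq : (fun u : Fin n × Fin n => z (v.1 + (u.1 : ℤ), v.2 + (u.2 : ℤ)))
          = (fun u : Fin n × Fin n => Y g (v.1 + (u.1 : ℤ), v.2 + (u.2 : ℤ))) := by
        funext u
        simp only [hzdef, if_pos (hout u)]
      rw [heq]
      exact hY g v
    · push_neg at hout
      obtain ⟨u0, hu0⟩ := hout
      have heq : (fun u : Fin n × Fin n => z (v.1 + (u.1 : ℤ), v.2 + (u.2 : ℤ)))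
          = (fun u : Fin n × Fin n => Y f (v.1 + (u.1 : ℤ), v.2 + (u.2 : ℤ))) := by
        funext u
        by_cases hin : MirrorAux.inB m (v.1 + (u.1 : ℤ), v.2 + (u.2 : ℤ))
        · have hni : ¬ MirrorAux.inBinner n m (v.1 + (u.1 : ℤ), v.2 + (u.2 : ℤ)) := by
            intro hinner
            exact hu0 (MirrorAux.window_in_box u hinner u0)
          have hloc := MirrorAux.loc_surj n m _ hin hni
          simp only [hzdef, if_pos hin]
          exact (hagree _ hloc).symm
        · simp only [hzdef, if_neg hin]
      rw [heq]
      exact hY f v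
  -- the projection of z is in the mirror shift
  have hzmem : (fun v : ℤ × ℤ => π (z v)) ∈ mirrorShift := by
    rw [h]
    exact ⟨z, hzY, rfl⟩
  obtain ⟨-, -, h3⟩ := hzmem
  -- column 0 of π∘z is filled
  have hcol : ∀ j : ℤ, π (z (0, j)) = true := by
    intro j
    have hnB : ¬ MirrorAux.inB m (0, j) := by
      intro hB
      exact absurd hB.2.1 (by norm_num)
    have : z (0, j) = Y f (0, j) := by simp only [hzdef, if_neg hnB]
    rw [this]
    have := congrFun (hYπ f) (0, j)
    rw [this]
    exact MirrorAux.mconf_zero m f j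
  have hk1 : (1 : ℤ) ≤ (i0 : ℤ) + 1 := by
    have : (0 : ℤ) ≤ (i0 : ℤ) := Int.ofNat_nonneg _
    omega
  have hmir := h3 0 hcol ((i0 : ℤ) + 1) hk1 (2 * ((j0 : ℤ) + 1))
  simp only [zero_sub, zero_add] at hmir
  -- evaluate both sides
  have hLin : MirrorAux.inB m (-((i0 : ℤ) + 1), 2 * ((j0 : ℤ) + 1)) := by
    have h1 : (i0 : ℕ) < m := i0.isLt
    have h2 : (j0 : ℕ) < m := j0.isLt
    refine ⟨?_, ?_, ?_, ?_⟩ <;> simp only <;> omega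
  have hRnB : ¬ MirrorAux.inB m ((i0 : ℤ) + 1, 2 * ((j0 : ℤ) + 1)) := by
    intro hB
    have := hB.2.1
    simp only at this
    have : (0 : ℤ) ≤ (i0 : ℤ) := Int.ofNat_nonneg _
    omega
  have hL : π (z (-((i0 : ℤ) + 1), 2 * ((j0 : ℤ) + 1))) = g (i0, j0) := by
    have hz1 : z (-((i0 : ℤ) + 1), 2 * ((j0 : ℤ) + 1))
        = Y g (-((i0 : ℤ) + 1), 2 * ((j0 : ℤ) + 1)) := by
      simp only [hzdef, if_pos hLin]
    rw [hz1]
    have := congrFun (hYπ g) (-((i0 : ℤ) + 1), 2 * ((j0 : ℤ) + 1))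
    rw [this]
    exact MirrorAux.mconf_left m g i0 j0
  have hR : π (z ((i0 : ℤ) + 1, 2 * ((j0 : ℤ) + 1))) = f (i0, j0) := by
    have hz1 : z ((i0 : ℤ) + 1, 2 * ((j0 : ℤ) + 1))
        = Y f ((i0 : ℤ) + 1, 2 * ((j0 : ℤ) + 1)) := by
      simp only [hzdef, if_neg hRnB]
    rw [hz1]
    have := congrFun (hYπ f) ((i0 : ℤ) + 1, 2 * ((j0 : ℤ) + 1))
    rw [this]
    exact MirrorAux.mconf_right m f i0 j0
  rw [hL, hR] at hmir
  exact hq0 hmir.symm
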